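/- Let r,k ∈ ℕ with k ≥ 1 and let φ be a first-order formula in the language of graphs with free variables indexed by Fin k that is semantically r-local and 2r-centered. Let G be a simple graph on a vertex type V and let ā ∈ V^k. Then: (i) if G ⊨ φ(ā), then dist_G(a_0,a_i) ≤ 2(k−1)r for every i ∈ Fin k, where a_0 is the first coordinate of ā; and (ii) if every coordinate of ā belongs to B := N_{(2k−1)r}(a_0), then G ⊨ φ(ā) if and only if the induced subgraph G[B] satisfies φ at the corresponding tuple. -/

import Mathlib

open FirstOrder

universe u

/-- `distLE G r a b` : there is a walk in `G` from `a` to `b` of length at most `r`. -/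
def distLE {V : Type*} (G : SimpleGraph V) (r : ℕ) (a b : V) : Prop :=
  ∃ w : G.Walk a b, w.length ≤ r

/-- The `r`-ball around a vertex `a`. -/
def ball {V : Type*} (G : SimpleGraph V) (r : ℕ) (a : V) : Set V :=
  {b | distLE G r a b}

/-- The `r`-neighborhood of a tuple: `⋃ i, N_r(a i)`. -/
def tball {V : Type*} (G : SimpleGraph V) (r : ℕ) {k : ℕ} (a : Fin k → V) : Set V :=
  ⋃ i, ball G r (a i)

theorem mem_tball {V : Type*} (G : SimpleGraph V) (r : ℕ) {k : ℕ} (a : Fin k → V)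
    (i : Fin k) : a i ∈ tball G r a :=
  Set.mem_iUnion.2 ⟨i, SimpleGraph.Walk.nil, by simp⟩

/-- A formula with `k` free variables is semantically `r`-local if its truth value at a
tuple only depends on the graph induced on the `r`-neighborhood of the tuple. -/
def SemLocal (r k : ℕ) (φ : Language.graph.Formula (Fin k)) : Prop :=
  ∀ (V : Type u) (G : SimpleGraph V) (a : Fin k → V),
    (letI := G.structure
     φ.Realize a) ↔
      (letI := (G.induce (tball G r a)).structure
       φ.Realize (fun i => (⟨a i, mem_tball G r a i⟩ : tball G r a)))

/-- The `r`-distance type (closeness graph) of a tuple `a : Fin k → V`: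
an edge between `i ≠ j` iff `dist_G (a i) (a j) ≤ r`. -/
def closeGraph {V : Type*} (G : SimpleGraph V) (r : ℕ) {k : ℕ} (a : Fin k → V) :
    SimpleGraph (Fin k) where
  Adj i j := i ≠ j ∧ distLE G r (a i) (a j)
  symm := by
    constructor
    rintro i j ⟨hij, w, hw⟩
    exact ⟨hij.symm, w.reverse, by simpa using hw⟩
  loopless := by constructor; rintro i ⟨hii, -⟩; exact hii rfl

/-- A formula of arity `k` is `2r`-centered if whenever it holds at a tuple, the
`2r`-distance type of the tuple is connected. -/
def Centered (r k : ℕ) (φ : Language.graph.Formula (Fin k)) : Prop :=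
  ∀ (V : Type u) (G : SimpleGraph V) (a : Fin k → V),
    (letI := G.structure
     φ.Realize a) → (closeGraph G (2 * r) a).Connected

namespace StmtAux
open SimpleGraph

variable {V : Type*}

lemma distLE_of_induce {G : SimpleGraph V} {s : Set V} {r : ℕ} {u v : s}
    (h : distLE (G.induce s) r u v) : distLE G r u.val v.val := by
  obtain ⟨w, hw⟩ := h
  exact ⟨w.map (SimpleGraph.Embedding.comap (Function.Embedding.subtype _) G).toHom,
    by have h := Walk.length_map (p := w) (f := (SimpleGraph.Embedding.comap (Function.Embedding.subtype _) G).toHom); exact h.le.trans hw⟩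

lemma distLE_trans {G : SimpleGraph V} {m n : ℕ} {a b c : V}
    (h1 : distLE G m a b) (h2 : distLE G n b c) : distLE G (m + n) a c := by
  obtain ⟨w1, h1⟩ := h1; obtain ⟨w2, h2⟩ := h2
  exact ⟨w1.append w2, by simp only [Walk.length_append]; omega⟩

lemma distLE_mono {G : SimpleGraph V} {m n : ℕ} {a b : V}
    (h : distLE G m a b) (hmn : m ≤ n) : distLE G n a b := by
  obtain ⟨w, hw⟩ := h; exact ⟨w, hw.trans hmn⟩

lemma walk_lift {G : SimpleGraph V} {s : Set V} :
    ∀ {u v : V} (p : G.Walk u v) (_ : ∀ x ∈ p.support, x ∈ s) (hu : u ∈ s) (hv : v ∈ s),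
      ∃ q : (G.induce s).Walk ⟨u, hu⟩ ⟨v, hv⟩, q.length = p.length := by
  intro u v p
  induction p with
  | nil => intro _ hu hv; exact ⟨Walk.nil, rfl⟩
  | @cons u' m v' h p ih =>
      intro hs hu hv
      have hm : m ∈ s := hs m (by simp)
      obtain ⟨q, hq⟩ := ih (fun x hx => hs x (by simp [hx])) hm hv
      exact ⟨Walk.cons (by simpa using h) q, by simp [hq]⟩

lemma distLE_lift {G : SimpleGraph V} {s : Set V} {r : ℕ} {u v : V}
    (hu : u ∈ s) (hv : v ∈ s)
    (h : ∃ w : G.Walk u v, w.length ≤ r ∧ ∀ x ∈ w.support, x ∈ s) :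
    distLE (G.induce s) r (⟨u, hu⟩ : s) ⟨v, hv⟩ := by
  obtain ⟨w, hw, hsupp⟩ := h
  obtain ⟨q, hq⟩ := walk_lift w hsupp hu hv
  exact ⟨q, hq ▸ hw⟩

lemma close_walk {G : SimpleGraph V} {s k : ℕ} {a : Fin k → V} {i j : Fin k}
    (p : (closeGraph G s a).Walk i j) : distLE G (p.length * s) (a i) (a j) := by
  induction p with
  | nil => exact ⟨Walk.nil, by simp⟩
  | @cons u' m v' h p ih =>
      have h1 : distLE G s (a u') (a m) := h.2
      have := distLE_trans h1 ih
      refine distLE_mono this (by simp [Walk.length_cons]; ring_nf; omega)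

lemma dist_of_connected {G : SimpleGraph V} {s k : ℕ} {a : Fin k → V}
    (hc : (closeGraph G s a).Connected) (i j : Fin k) (hk : 0 < k) :
    distLE G ((k - 1) * s) (a i) (a j) := by
  obtain ⟨p⟩ := hc i j
  have hpath := p.toPath.prop
  have hlen : (p.toPath : (closeGraph G s a).Walk i j).length < k := by
    simpa using hpath.length_lt
  have := close_walk (p.toPath : (closeGraph G s a).Walk i j)
  exact distLE_mono this (Nat.mul_le_mul_right s (by omega))

/-- A graph isomorphism induces a first-order `Language.graph`-equivalence. -/
def isoEquiv {W : Type*} {G : SimpleGraph V} {H : SimpleGraph W} (e : G ≃g H) :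
    @FirstOrder.Language.Equiv FirstOrder.Language.graph V W G.structure H.structure :=
  letI := G.structure; letI := H.structure
  { toEquiv := e.toEquiv
    map_fun' := fun {n} f _ => isEmptyElim f
    map_rel' := fun {n} R x => by
      cases R
      show H.Adj _ _ ↔ G.Adj _ _
      exact e.map_adj_iff }

end StmtAux

theorem stmt_14 {V : Type u} (r k : ℕ) (hk : 0 < k)
    (φ : Language.graph.Formula (Fin k))
    (hloc : SemLocal.{u} r k φ) (hcent : Centered.{u} r k φ)
    (G : SimpleGraph V) (a : Fin k → V) :
    ((letI := G.structure
      φ.Realize a) →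
        ∀ i : Fin k, distLE G (2 * (k - 1) * r) (a ⟨0, hk⟩) (a i)) ∧
    (∀ ha : ∀ i : Fin k, a i ∈ ball G ((2 * k - 1) * r) (a ⟨0, hk⟩),
      ((letI := G.structure
        φ.Realize a) ↔
        (letI := (G.induce (ball G ((2 * k - 1) * r) (a ⟨0, hk⟩))).structure
         φ.Realize
           (fun i => (⟨a i, ha i⟩ : ball G ((2 * k - 1) * r) (a ⟨0, hk⟩)))))) := by
  classical
  have part1 : (letI := G.structure; φ.Realize a) →
      ∀ i : Fin k, distLE G (2 * (k - 1) * r) (a ⟨0, hk⟩) (a i) := by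
    intro hφ i
    have hc := hcent V G a hφ
    have h := StmtAux.dist_of_connected hc ⟨0, hk⟩ i hk
    exact StmtAux.distLE_mono h (le_of_eq (by ring))
  refine ⟨part1, ?_⟩
  intro ha
  set B : Set V := ball G ((2 * k - 1) * r) (a ⟨0, hk⟩) with hBdef
  have key : (∀ i, distLE G (2 * (k - 1) * r) (a ⟨0, hk⟩) (a i)) →
      ((letI := G.structure; φ.Realize a) ↔
       (letI := (G.induce B).structure
        φ.Realize (fun i => (⟨a i, ha i⟩ : B)))) := by
    intro hd
    set a' : Fin k → B := fun i => ⟨a i, ha i⟩ with ha'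
    have harith : 2 * (k - 1) * r + r ≤ (2 * k - 1) * r := by
      have h1 : 2 * (k - 1) * r + r = (2 * (k - 1) + 1) * r := by ring
      rw [h1]
      exact Nat.mul_le_mul_right r (by omega)
    have c1 : ∀ v ∈ tball G r a, v ∈ B := by
      intro v hv
      obtain ⟨i, hi⟩ := Set.mem_iUnion.1 hv
      exact StmtAux.distLE_mono (StmtAux.distLE_trans (hd i) hi) harith
    have c1' : ∀ v (hv : v ∈ tball G r a),
        (⟨v, c1 v hv⟩ : B) ∈ tball (G.induce B) r a' := by
      intro v hv
      obtain ⟨i, w, hw⟩ := Set.mem_iUnion.1 hv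
      refine Set.mem_iUnion.2 ⟨i, ?_⟩
      refine StmtAux.distLE_lift (ha i) _ ⟨w, hw, ?_⟩
      intro x hx
      have hx' : distLE G r (a i) x :=
        ⟨w.takeUntil x hx, (w.length_takeUntil_le hx).trans hw⟩
      exact StmtAux.distLE_mono (StmtAux.distLE_trans (hd i) hx') harith
    have c2 : ∀ (w : B), w ∈ tball (G.induce B) r a' → w.val ∈ tball G r a := by
      intro w hw
      obtain ⟨i, hi⟩ := Set.mem_iUnion.1 hw
      exact Set.mem_iUnion.2 ⟨i, StmtAux.distLE_of_induce hi⟩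
    let E : tball G r a ≃ tball (G.induce B) r a' :=
      { toFun := fun v => ⟨⟨v.val, c1 v.val v.prop⟩, c1' v.val v.prop⟩
        invFun := fun w => ⟨w.val.val, c2 w.val w.prop⟩
        left_inv := fun v => rfl
        right_inv := fun w => rfl }
    let I : (G.induce (tball G r a)) ≃g ((G.induce B).induce (tball (G.induce B) r a')) :=
      { toEquiv := E
        map_rel_iff' := Iff.rfl }
    letI := G.structure
    letI := (G.induce B).structure
    letI := (G.induce (tball G r a)).structure
    letI := ((G.induce B).induce (tball (G.induce B) r a')).structure
    have h1 := hloc V G a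
    have h2 := hloc B (G.induce B) a'
    have h3 := (Language.StrongHomClass.realize_formula (StmtAux.isoEquiv I)
      (v := fun i => (⟨a i, mem_tball G r a i⟩ : tball G r a)) φ).symm
    exact h1.trans (h3.trans h2.symm)
  constructor
  · intro hφ
    exact (key (part1 hφ)).1 hφ
  · intro hφ'
    have hc := hcent B (G.induce B) (fun i => ⟨a i, ha i⟩) hφ'
    have hd : ∀ i, distLE G (2 * (k - 1) * r) (a ⟨0, hk⟩) (a i) := by
      intro i
      have h := StmtAux.dist_of_connected hc ⟨0, hk⟩ i hk
      have h' := StmtAux.distLE_of_induce h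
      exact StmtAux.distLE_mono h' (le_of_eq (by ring))
    exact (key hd).2 hφ'
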